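/- Let S = (S⁻, G) and T = (T⁻, F) be recursive causal teams over σ with S⁻ and T⁻ nonempty. Then S ⊨^c Θ^T ∧ Φ^F if and only if there exists a causal team R over σ with S ≈ R and R a causal subteam of T (i.e. R has function component F and R⁻ ⊆ T⁻). -/

import Mathlib

open scoped Classical
set_option linter.unusedSectionVars false

noncomputable section

/-- Assignments of values to variables. -/
abbrev Asg (V : Type) (Val : V → Type) : Type := (v : V) → Val v

/-- A recursive system of functions over the signature `(V, Val)`:
each endogenous variable `v ∈ En` has a parent set `pa v` and a function `fn v`
computing its value from the values of its parents; recursiveness says that the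
induced causal graph is acyclic. -/
structure Sys (V : Type) (Val : V → Type) : Type where
  En : Finset V
  pa : V → Finset V
  fn : (v : V) → ((w : V) → w ∈ pa v → Val w) → Val v
  recursive : ∀ x : V, ¬ Relation.TransGen (fun a b => b ∈ En ∧ a ∈ pa b) x x

variable {V : Type} [Fintype V] [DecidableEq V] [Nonempty V]
  {Val : V → Type} [∀ v, Fintype (Val v)] [∀ v, DecidableEq (Val v)] [∀ v, Nonempty (Val v)]

namespace CausalTeam

/-- The edge relation of the causal graph of a system of functions. -/
@[reducible] def Edge (F : Sys V Val) (a b : V) : Prop := b ∈ F.En ∧ a ∈ F.pa b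

theorem wfEdge (F : Sys V Val) : WellFounded (Edge F) := by
  have h2 : WellFounded (Relation.TransGen (Edge F)) := by
    have hirr : IsIrrefl V (Relation.TransGen (Edge F)) := ⟨F.recursive⟩
    have htr : IsTrans V (Relation.TransGen (Edge F)) :=
      ⟨fun _ _ _ h h' => Relation.TransGen.trans h h'⟩
    exact Finite.wellFounded_of_trans_of_irrefl _
  exact Subrelation.wf (fun h => Relation.TransGen.single h) h2

/-- An assignment is compatible with a system of functions if every endogenous
variable takes the value prescribed by its function. -/
def Compat (F : Sys V Val) (s : Asg V Val) : Prop :=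
  ∀ v ∈ F.En, s v = F.fn v (fun w _ => s w)

/-- The variables occurring in a conjunction of equations `𝐗 = 𝐱`. -/
def ikeys (I : List ((v : V) × Val v)) : List V := I.map Sigma.fst

/-- A conjunction of equations is consistent if it contains no pair `X = x`, `X = x'`
with distinct values `x ≠ x'`. -/
def IConsistent (I : List ((v : V) × Val v)) : Prop :=
  ∀ p ∈ I, ∀ q ∈ I, p.1 = q.1 → p = q

/-- Look up the (first) value assigned to a variable by a conjunction of equations. -/
def ilookup : List ((v : V) × Val v) → (v : V) → Option (Val v)
  | [], _ => none
  | p :: I, v => if h : p.1 = v then some (h ▸ p.2) else ilookup I v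

/-- The intervened system of functions `F_{𝐗=𝐱}`: the restriction of `F` to `En(F) ∖ 𝐗`. -/
def doSys (F : Sys V Val) (I : List ((v : V) × Val v)) : Sys V Val where
  En := F.En.filter (fun v => v ∉ ikeys I)
  pa := F.pa
  fn := F.fn
  recursive := by
    intro x hx
    refine F.recursive x (Relation.TransGen.mono ?_ x x hx)
    intro a b hab
    exact ⟨(Finset.mem_filter.mp hab.1).1, hab.2⟩

/-- The intervened assignment `s_{𝐗=𝐱}`: variables in `𝐗` get the prescribed values,
exogenous variables outside `𝐗` keep their values, and endogenous variables outside `𝐗`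
are recomputed (recursively) by their functions. -/
def doAsg (F : Sys V Val) (I : List ((v : V) × Val v)) (s : Asg V Val) : Asg V Val :=
  (wfEdge F).fix (C := fun v => Val v) fun v ih =>
    match ilookup I v with
    | some x => x
    | none => if h : v ∈ F.En then F.fn v (fun w hw => ih w ⟨h, hw⟩) else s v

/-- Formulas of the languages CO[σ], CO⩗[σ] and COD[σ]:
equations `X = x`, dependence atoms `=(𝐗;Y)`, negation, conjunction,
tensor disjunction `∨`, intuitionistic disjunction `⩗`, and counterfactuals `𝐗=𝐱 □→ φ`. -/
inductive Fml (V : Type) (Val : V → Type) : Type where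
  | eq : (v : V) → Val v → Fml V Val
  | dep : List V → V → Fml V Val
  | neg : Fml V Val → Fml V Val
  | and : Fml V Val → Fml V Val → Fml V Val
  | or : Fml V Val → Fml V Val → Fml V Val
  | ior : Fml V Val → Fml V Val → Fml V Val
  | cf : List ((v : V) × Val v) → Fml V Val → Fml V Val

/-- CO[σ]-formulas: equations, closed under ¬, ∧, ∨ and counterfactuals. -/
inductive IsCO : Fml V Val → Prop where
  | eq (v : V) (x : Val v) : IsCO (Fml.eq v x)
  | neg {φ} : IsCO φ → IsCO (Fml.neg φ)
  | and {φ ψ} : IsCO φ → IsCO ψ → IsCO (Fml.and φ ψ)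
  | or {φ ψ} : IsCO φ → IsCO ψ → IsCO (Fml.or φ ψ)
  | cf {φ} (I : List ((v : V) × Val v)) : IsCO φ → IsCO (Fml.cf I φ)

/-- CO⩗[σ]-formulas: additionally closed under ⩗; negation applies to CO-formulas only. -/
inductive IsCOV : Fml V Val → Prop where
  | eq (v : V) (x : Val v) : IsCOV (Fml.eq v x)
  | neg {φ} : IsCO φ → IsCOV (Fml.neg φ)
  | and {φ ψ} : IsCOV φ → IsCOV ψ → IsCOV (Fml.and φ ψ)
  | or {φ ψ} : IsCOV φ → IsCOV ψ → IsCOV (Fml.or φ ψ)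
  | ior {φ ψ} : IsCOV φ → IsCOV ψ → IsCOV (Fml.ior φ ψ)
  | cf {φ} (I : List ((v : V) × Val v)) : IsCOV φ → IsCOV (Fml.cf I φ)

/-- COD[σ]-formulas: additionally allow dependence atoms; negation applies to
CO-formulas only. -/
inductive IsCOD : Fml V Val → Prop where
  | eq (v : V) (x : Val v) : IsCOD (Fml.eq v x)
  | dep (X : List V) (Y : V) : IsCOD (Fml.dep X Y)
  | neg {φ} : IsCO φ → IsCOD (Fml.neg φ)
  | and {φ ψ} : IsCOD φ → IsCOD ψ → IsCOD (Fml.and φ ψ)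
  | or {φ ψ} : IsCOD φ → IsCOD ψ → IsCOD (Fml.or φ ψ)
  | cf {φ} (I : List ((v : V) × Val v)) : IsCOD φ → IsCOD (Fml.cf I φ)

/-- Satisfaction over causal teams `(Tm, F)` (the causal team semantics `⊨^c`). -/
def satC : Set (Asg V Val) → Sys V Val → Fml V Val → Prop
  | Tm, _, Fml.eq v x => ∀ s ∈ Tm, s v = x
  | Tm, _, Fml.dep X Y => ∀ s ∈ Tm, ∀ t ∈ Tm, (∀ w ∈ X, s w = t w) → s Y = t Y
  | Tm, F, Fml.neg φ => ∀ s ∈ Tm, ¬ satC {s} F φ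
  | Tm, F, Fml.and φ ψ => satC Tm F φ ∧ satC Tm F ψ
  | Tm, F, Fml.or φ ψ => ∃ T1 T2 : Set (Asg V Val), T1 ∪ T2 = Tm ∧ satC T1 F φ ∧ satC T2 F ψ
  | Tm, F, Fml.ior φ ψ => satC Tm F φ ∨ satC Tm F ψ
  | Tm, F, Fml.cf I φ => IConsistent I → satC (doAsg F I '' Tm) (doSys F I) φ

/-- Satisfaction over generalized causal teams (the semantics `⊨^g`). -/
def satG : Set (Asg V Val × Sys V Val) → Fml V Val → Prop
  | T, Fml.eq v x => ∀ p ∈ T, p.1 v = x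
  | T, Fml.dep X Y => ∀ p ∈ T, ∀ q ∈ T, (∀ w ∈ X, p.1 w = q.1 w) → p.1 Y = q.1 Y
  | T, Fml.neg φ => ∀ p ∈ T, ¬ satG {p} φ
  | T, Fml.and φ ψ => satG T φ ∧ satG T ψ
  | T, Fml.or φ ψ => ∃ T1 T2 : Set (Asg V Val × Sys V Val), T1 ∪ T2 = T ∧ satG T1 φ ∧ satG T2 ψ
  | T, Fml.ior φ ψ => satG T φ ∨ satG T ψ
  | T, Fml.cf I φ => IConsistent I →
      satG ((fun p : Asg V Val × Sys V Val => (doAsg p.2 I p.1, doSys p.2 I)) '' T) φ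

/-- A generalized causal team: a set of pairs `(s, F)` with `s` compatible with `F`. -/
def GTOk (T : Set (Asg V Val × Sys V Val)) : Prop := ∀ p ∈ T, Compat p.2 p.1

/-- The falsum `⊥`, an abbreviation for `X=x ∧ ¬(X=x)`. -/
def fBot : Fml V Val :=
  Fml.and (Fml.eq (Classical.arbitrary V) (Classical.arbitrary (Val (Classical.arbitrary V))))
    (Fml.neg (Fml.eq (Classical.arbitrary V) (Classical.arbitrary (Val (Classical.arbitrary V)))))

/-- A canonical tautology. -/
def fTop : Fml V Val := Fml.neg fBot

/-- Finite conjunction of a list of formulas. -/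
def bigAnd : List (Fml V Val) → Fml V Val
  | [] => fTop
  | [φ] => φ
  | φ :: ψ :: rest => Fml.and φ (bigAnd (ψ :: rest))

/-- Finite tensor disjunction of a list of formulas. -/
def bigOr : List (Fml V Val) → Fml V Val
  | [] => fBot
  | [φ] => φ
  | φ :: ψ :: rest => Fml.or φ (bigOr (ψ :: rest))

/-- Finite intuitionistic disjunction of a list of formulas. -/
def bigIor : List (Fml V Val) → Fml V Val
  | [] => fBot
  | [φ] => φ
  | φ :: ψ :: rest => Fml.ior φ (bigIor (ψ :: rest))

/-- The conjunction of equations describing the restriction of the assignment `t`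
to the set `S` of variables. -/
def eqList (S : Finset V) (t : Asg V Val) : List ((v : V) × Val v) :=
  S.toList.map (fun w => ⟨w, t w⟩)

/-- The list of all assignments over the signature. -/
def allAsg : List (Asg V Val) := (Finset.univ : Finset (Asg V Val)).toList

/-- `η(v)`: for every tuple of values for the variables other than `v`, intervening
with those values forces `v` to take the value computed by `F.fn v` from the parents. -/
def eta (F : Sys V Val) (v : V) : Fml V Val :=
  bigAnd (allAsg.map (fun t =>
    Fml.cf (eqList (Finset.univ.erase v) t) (Fml.eq v (F.fn v (fun w _ => t w)))))

/-- `ξ(v)`: the value of `v` is unaffected by interventions on all other variables. -/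
def xi (v : V) : Fml V Val :=
  bigAnd ((Finset.univ : Finset (Val v)).toList.map (fun x =>
    bigAnd (allAsg.map (fun t =>
      Fml.or (Fml.neg (Fml.eq v x))
        (Fml.cf (eqList (Finset.univ.erase v) t) (Fml.eq v x))))))

/-- `Cn(F)`: the endogenous variables of `F` governed by a constant function. -/
def Cn (F : Sys V Val) : Finset V :=
  F.En.filter (fun v => ∃ c : Val v, ∀ p, F.fn v p = c)

/-- The non-constant endogenous variables `En(F) ∖ Cn(F)`. -/
def strictEn (F : Sys V Val) : Finset V := F.En \ Cn F

/-- `F_v ∼ G_v`: equivalence of the two functions for `v` up to dummy arguments. -/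
def SimFn (F G : Sys V Val) (v : V) : Prop :=
  ∀ (x : (w : V) → w ∈ F.pa v ∩ G.pa v → Val w)
    (y : (w : V) → w ∈ F.pa v \ G.pa v → Val w)
    (z : (w : V) → w ∈ G.pa v \ F.pa v → Val w),
    F.fn v (fun w hw =>
      if h : w ∈ G.pa v then x w (Finset.mem_inter.mpr ⟨hw, h⟩)
      else y w (Finset.mem_sdiff.mpr ⟨hw, h⟩)) =
    G.fn v (fun w hw =>
      if h : w ∈ F.pa v then x w (Finset.mem_inter.mpr ⟨h, hw⟩)
      else z w (Finset.mem_sdiff.mpr ⟨hw, h⟩))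

/-- `F ∼ G`: equivalence of systems of functions up to dummy arguments. -/
def Sim (F G : Sys V Val) : Prop :=
  strictEn F = strictEn G ∧ ∀ v ∈ strictEn F, SimFn F G v

/-- The CO[σ]-formula `Φ^F` characterizing the function component `F` up to `∼`. -/
def Phi (F : Sys V Val) : Fml V Val :=
  Fml.and (bigAnd (F.En.toList.map (fun v => eta F v)))
    (bigAnd ((((Finset.univ : Finset V) \ F.En) ∪ Cn F).toList.map (fun v => xi v)))

/-- The CO[σ]-formula `Θ^A`: the team component is included in `A`. -/
def Theta (A : Finset (Asg V Val)) : Fml V Val :=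
  bigOr (A.toList.map (fun s =>
    bigAnd ((Finset.univ : Finset V).toList.map (fun v => Fml.eq v (s v)))))

/-- `χ₁`: all variables are constant in the team. -/
def chi1 : Fml V Val :=
  bigAnd ((Finset.univ : Finset V).toList.map (fun v => Fml.dep [] v))

/-- `χ_k`: the team has at most `k` elements. -/
def chi : ℕ → Fml V Val
  | 0 => fBot
  | 1 => chi1
  | (k+2) => Fml.or chi1 (chi (k+1))


section Aux
variable {T : Set (Asg V Val)} {F G : Sys V Val}

lemma satC_eq' (v : V) (x : Val v) : satC T F (Fml.eq v x) ↔ ∀ s ∈ T, s v = x := Iff.rfl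
lemma satC_neg' (φ : Fml V Val) : satC T F (Fml.neg φ) ↔ ∀ s ∈ T, ¬ satC {s} F φ := Iff.rfl
lemma satC_and' (φ ψ : Fml V Val) : satC T F (Fml.and φ ψ) ↔ satC T F φ ∧ satC T F ψ := Iff.rfl
lemma satC_or' (φ ψ : Fml V Val) : satC T F (Fml.or φ ψ) ↔
    ∃ T1 T2, T1 ∪ T2 = T ∧ satC T1 F φ ∧ satC T2 F ψ := Iff.rfl
lemma satC_cf' (I : List ((v : V) × Val v)) (φ : Fml V Val) : satC T F (Fml.cf I φ) ↔
    (IConsistent I → satC (doAsg F I '' T) (doSys F I) φ) := Iff.rfl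

lemma not_satC_fBot (s : Asg V Val) : ¬ satC {s} F fBot := by
  rintro ⟨h1, h2⟩
  exact h2 s rfl h1

lemma satC_fTop : satC T F fTop := fun s _ => not_satC_fBot s

lemma satC_fBot_iff : satC T F fBot ↔ T = ∅ := by
  constructor
  · rintro ⟨h1, h2⟩
    ext s; simp only [Set.mem_empty_iff_false, iff_false]
    intro hs
    exact h2 s hs (fun u hu => by rw [Set.mem_singleton_iff.mp hu]; exact h1 s hs)
  · rintro rfl; exact ⟨fun s h => h.elim, fun s h => h.elim⟩

lemma satC_bigAnd : ∀ (l : List (Fml V Val)), satC T F (bigAnd l) ↔ ∀ φ ∈ l, satC T F φ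
  | [] => by simpa [bigAnd] using (satC_fTop (T := T) (F := F))
  | [φ] => by simp [bigAnd]
  | φ :: ψ :: l => by
    rw [show bigAnd (φ :: ψ :: l) = Fml.and φ (bigAnd (ψ :: l)) from rfl,
      satC_and', satC_bigAnd (ψ :: l)]
    simp

lemma ilookup_map (t : Asg V Val) (w : V) : ∀ (l : List V),
    ilookup (l.map fun u => (⟨u, t u⟩ : (v : V) × Val v)) w = if w ∈ l then some (t w) else none
  | [] => by simp [ilookup]
  | a :: l => by
    by_cases h : a = w
    · subst h; simp [ilookup]
    · rw [List.map_cons, show ilookup ((⟨a, t a⟩ : (v : V) × Val v) ::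
        (l.map fun u => (⟨u, t u⟩ : (v : V) × Val v))) w
          = if h : a = w then some (h ▸ t a) else ilookup (l.map fun u =>
            (⟨u, t u⟩ : (v : V) × Val v)) w from rfl]
      rw [dif_neg h, ilookup_map t w l]
      have : ¬ (w = a) := fun hh => h hh.symm
      simp [this]

lemma ilookup_eqList (S : Finset V) (t : Asg V Val) (w : V) :
    ilookup (eqList S t) w = if w ∈ S then some (t w) else none := by
  rw [eqList, ilookup_map]; simp

lemma mem_ikeys_eqList (S : Finset V) (t : Asg V Val) (w : V) :
    w ∈ ikeys (eqList S t) ↔ w ∈ S := by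
  simp [ikeys, eqList]

lemma iconsistent_eqList (S : Finset V) (t : Asg V Val) : IConsistent (eqList S t) := by
  intro p hp q hq h
  simp only [eqList, List.mem_map, Finset.mem_toList] at hp hq
  obtain ⟨a, -, rfl⟩ := hp
  obtain ⟨b, -, rfl⟩ := hq
  cases h; rfl

lemma doAsg_eq (F : Sys V Val) (I : List ((v : V) × Val v)) (s : Asg V Val) (v : V) :
    doAsg F I s v = match ilookup I v with
      | some x => x
      | none => if v ∈ F.En then F.fn v (fun w _ => doAsg F I s w) else s v := by
  conv_lhs => rw [doAsg, WellFounded.fix_eq]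
  rfl

lemma no_self_parent (F : Sys V Val) {v : V} (h : v ∈ F.En) : v ∉ F.pa v :=
  fun hp => F.recursive v (Relation.TransGen.single ⟨h, hp⟩)

lemma doAsg_full_ne (F : Sys V Val) (t s : Asg V Val) (v w : V) (hw : w ≠ v) :
    doAsg F (eqList (Finset.univ.erase v) t) s w = t w := by
  rw [doAsg_eq, ilookup_eqList]
  simp [hw]

lemma doAsg_full_self (F : Sys V Val) (t s : Asg V Val) (v : V) :
    doAsg F (eqList (Finset.univ.erase v) t) s v =
      if h : v ∈ F.En then F.fn v (fun w _ => t w) else s v := by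
  rw [doAsg_eq, ilookup_eqList]
  simp only [Finset.mem_erase, ne_eq, not_true_eq_false, false_and, if_false]
  split_ifs with h
  · congr 1
    funext w hw
    have hwv : w ≠ v := fun e => no_self_parent F h (e ▸ hw)
    exact doAsg_full_ne F t s v w hwv
  · rfl

lemma satC_cf_eq_full (Sm : Set (Asg V Val)) (G : Sys V Val) (v : V) (t : Asg V Val) (x : Val v) :
    satC Sm G (Fml.cf (eqList (Finset.univ.erase v) t) (Fml.eq v x)) ↔
      ∀ s ∈ Sm, (if v ∈ G.En then G.fn v (fun w _ => t w) else s v) = x := by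
  rw [satC_cf']
  constructor
  · intro h s hs
    have := h (iconsistent_eqList _ t) _ (Set.mem_image_of_mem _ hs)
    rwa [doAsg_full_self, dite_eq_ite] at this
  · intro h _
    rintro p ⟨s, hs, rfl⟩
    rw [doAsg_full_self, dite_eq_ite]
    exact h s hs

lemma satC_eta (Sm : Set (Asg V Val)) (G F : Sys V Val) (v : V) :
    satC Sm G (eta F v) ↔ ∀ (t : Asg V Val), ∀ s ∈ Sm,
      (if v ∈ G.En then G.fn v (fun w _ => t w) else s v) = F.fn v (fun w _ => t w) := by
  rw [eta, satC_bigAnd]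
  constructor
  · intro h t
    have := h _ (List.mem_map_of_mem (Finset.mem_toList.mpr (Finset.mem_univ t)))
    exact (satC_cf_eq_full Sm G v t _).mp this
  · intro h φ hφ
    obtain ⟨t, -, rfl⟩ := List.mem_map.mp hφ
    exact (satC_cf_eq_full Sm G v t _).mpr (h t)

lemma satC_or_negeq_cf (Sm : Set (Asg V Val)) (G : Sys V Val) (v : V) (x : Val v)
    (t : Asg V Val) :
    satC Sm G (Fml.or (Fml.neg (Fml.eq v x))
      (Fml.cf (eqList (Finset.univ.erase v) t) (Fml.eq v x))) ↔
      ∀ s ∈ Sm, s v = x → (if v ∈ G.En then G.fn v (fun w _ => t w) else s v) = x := by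
  rw [satC_or']
  constructor
  · rintro ⟨T1, T2, hU, h1, h2⟩ s hs hsx
    rcases (hU ▸ hs : s ∈ T1 ∪ T2) with h | h
    · exact absurd (show satC {s} G (Fml.eq v x) from fun u hu => by
        rw [Set.mem_singleton_iff.mp hu]; exact hsx) (h1 s h)
    · exact (satC_cf_eq_full T2 G v t x).mp h2 s h
  · intro h
    refine ⟨{s ∈ Sm | s v ≠ x}, {s ∈ Sm | s v = x}, ?_, ?_, ?_⟩
    · ext s; by_cases hx : s v = x <;> simp [hx]
    · intro s hs hc
      exact hs.2 (hc s rfl)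
    · exact (satC_cf_eq_full _ G v t x).mpr (fun s hs => h s hs.1 hs.2)

lemma satC_xi (Sm : Set (Asg V Val)) (G : Sys V Val) (v : V) :
    satC Sm G (xi v) ↔ ∀ (t : Asg V Val), ∀ s ∈ Sm,
      (if v ∈ G.En then G.fn v (fun w _ => t w) else s v) = s v := by
  rw [xi, satC_bigAnd]
  constructor
  · intro h t s hs
    have hx := h _ (List.mem_map_of_mem (Finset.mem_toList.mpr (Finset.mem_univ (s v))))
    rw [satC_bigAnd] at hx
    have := hx _ (List.mem_map_of_mem (Finset.mem_toList.mpr (Finset.mem_univ t)))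
    exact (satC_or_negeq_cf Sm G v (s v) t).mp this s hs rfl
  · intro h φ hφ
    obtain ⟨x, -, rfl⟩ := List.mem_map.mp hφ
    rw [satC_bigAnd]
    intro ψ hψ
    obtain ⟨t, -, rfl⟩ := List.mem_map.mp hψ
    refine (satC_or_negeq_cf Sm G v x t).mpr (fun s hs hsx => ?_)
    rw [← hsx]; exact h t s hs

lemma satC_desc (Tset : Set (Asg V Val)) (G : Sys V Val) (s : Asg V Val) :
    satC Tset G (bigAnd ((Finset.univ : Finset V).toList.map (fun v => Fml.eq v (s v)))) ↔
      ∀ t ∈ Tset, t = s := by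
  rw [satC_bigAnd]
  constructor
  · intro h t ht
    funext v
    exact h _ (List.mem_map_of_mem (Finset.mem_toList.mpr (Finset.mem_univ v))) t ht
  · intro h φ hφ
    obtain ⟨v, -, rfl⟩ := List.mem_map.mp hφ
    intro t ht
    rw [h t ht]

lemma satC_bigOr_desc (G : Sys V Val) :
    ∀ (l : List (Asg V Val)) (Tset : Set (Asg V Val)),
      satC Tset G (bigOr (l.map fun s =>
        bigAnd ((Finset.univ : Finset V).toList.map (fun v => Fml.eq v (s v))))) ↔
      ∀ t ∈ Tset, t ∈ l
  | [], Tset => by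
    rw [List.map_nil, show bigOr ([] : List (Fml V Val)) = fBot from rfl, satC_fBot_iff]
    simp [Set.eq_empty_iff_forall_notMem]
  | [s], Tset => by
    rw [List.map_cons, List.map_nil]
    rw [show bigOr [bigAnd ((Finset.univ : Finset V).toList.map (fun v => Fml.eq v (s v)))]
      = bigAnd ((Finset.univ : Finset V).toList.map (fun v => Fml.eq v (s v))) from rfl]
    rw [satC_desc]
    simp
  | s :: s' :: l, Tset => by
    rw [List.map_cons, List.map_cons,
      show bigOr (bigAnd ((Finset.univ : Finset V).toList.map (fun v => Fml.eq v (s v))) ::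
        bigAnd ((Finset.univ : Finset V).toList.map (fun v => Fml.eq v (s' v))) ::
        (l.map fun u => bigAnd ((Finset.univ : Finset V).toList.map (fun v => Fml.eq v (u v)))))
      = Fml.or (bigAnd ((Finset.univ : Finset V).toList.map (fun v => Fml.eq v (s v))))
        (bigOr ((s' :: l).map fun u =>
          bigAnd ((Finset.univ : Finset V).toList.map (fun v => Fml.eq v (u v))))) from rfl,
      satC_or']
    constructor
    · rintro ⟨T1, T2, hU, h1, h2⟩ t ht
      rcases (hU ▸ ht : t ∈ T1 ∪ T2) with h | h
      · rw [(satC_desc T1 G s).mp h1 t h]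
        exact List.mem_cons_self
      · exact List.mem_cons_of_mem s ((satC_bigOr_desc G (s' :: l) T2).mp h2 t h)
    · intro h
      refine ⟨{t ∈ Tset | t = s}, {t ∈ Tset | t ≠ s}, ?_, ?_, ?_⟩
      · ext t; by_cases ht : t = s <;> simp [ht]
      · exact (satC_desc _ G s).mpr (fun t ht => ht.2)
      · rw [satC_bigOr_desc G (s' :: l)]
        intro t ht
        rcases List.mem_cons.mp (h t ht.1) with h' | h'
        · exact absurd h' ht.2
        · exact h'

lemma satC_Theta (Sm Tm : Finset (Asg V Val)) (G : Sys V Val) :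
    satC (↑Sm : Set (Asg V Val)) G (Theta Tm) ↔ Sm ⊆ Tm := by
  rw [Theta, satC_bigOr_desc]
  constructor
  · intro h s hs
    exact Finset.mem_toList.mp (h s (Finset.mem_coe.mpr hs))
  · intro h s hs
    exact Finset.mem_toList.mpr (h (Finset.mem_coe.mp hs))

lemma mem_Cn_iff (F : Sys V Val) (v : V) :
    v ∈ Cn F ↔ v ∈ F.En ∧ ∃ c : Val v, ∀ p, F.fn v p = c := by
  simp [Cn]

lemma fn_const_of_forall_total (F : Sys V Val) (v : V) (c : Val v)
    (h : ∀ t : Asg V Val, F.fn v (fun w _ => t w) = c) :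
    ∀ p, F.fn v p = c := by
  intro p
  have e : F.fn v p = F.fn v (fun w _ =>
      (fun w => if hw : w ∈ F.pa v then p w hw else Classical.arbitrary _) w) := by
    congr 1
    funext w hw
    exact (dif_pos hw).symm
  rw [e]
  exact h _

/-- combined total assignment from partial data -/
def combT (G F : Sys V Val) (v : V)
    (x : (w : V) → w ∈ G.pa v ∩ F.pa v → Val w)
    (y : (w : V) → w ∈ G.pa v \ F.pa v → Val w)
    (z : (w : V) → w ∈ F.pa v \ G.pa v → Val w) : Asg V Val := fun w =>
  if h1 : w ∈ G.pa v ∩ F.pa v then x w h1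
  else if h2 : w ∈ G.pa v \ F.pa v then y w h2
  else if h3 : w ∈ F.pa v \ G.pa v then z w h3
  else Classical.arbitrary _

lemma simFn_of_total (G F : Sys V Val) (v : V)
    (h : ∀ t : Asg V Val, G.fn v (fun w _ => t w) = F.fn v (fun w _ => t w)) :
    SimFn G F v := by
  intro x y z
  have e1 : G.fn v (fun w _ => combT G F v x y z w) = G.fn v (fun w hw =>
      if h' : w ∈ F.pa v then x w (Finset.mem_inter.mpr ⟨hw, h'⟩)
      else y w (Finset.mem_sdiff.mpr ⟨hw, h'⟩)) := by
    congr 1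
    funext w hw
    by_cases h' : w ∈ F.pa v
    · rw [dif_pos h', combT, dif_pos (Finset.mem_inter.mpr ⟨hw, h'⟩)]
    · rw [dif_neg h', combT, dif_neg (fun hc => h' (Finset.mem_inter.mp hc).2),
        dif_pos (Finset.mem_sdiff.mpr ⟨hw, h'⟩)]
  have e2 : F.fn v (fun w _ => combT G F v x y z w) = F.fn v (fun w hw =>
      if h' : w ∈ G.pa v then x w (Finset.mem_inter.mpr ⟨h', hw⟩)
      else z w (Finset.mem_sdiff.mpr ⟨hw, h'⟩)) := by
    congr 1
    funext w hw
    by_cases h' : w ∈ G.pa v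
    · rw [dif_pos h', combT, dif_pos (Finset.mem_inter.mpr ⟨h', hw⟩)]
    · rw [dif_neg h', combT, dif_neg (fun hc => h' (Finset.mem_inter.mp hc).1),
        dif_neg (fun hc => h' (Finset.mem_sdiff.mp hc).1),
        dif_pos (Finset.mem_sdiff.mpr ⟨hw, h'⟩)]
  rw [← e1, ← e2]
  exact h (combT G F v x y z)

lemma total_of_simFn (G F : Sys V Val) (v : V) (h : SimFn G F v) (t : Asg V Val) :
    G.fn v (fun w _ => t w) = F.fn v (fun w _ => t w) := by
  have h2 : G.fn v (fun w (hw : w ∈ G.pa v) => if _ : w ∈ F.pa v then t w else t w)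
      = F.fn v (fun w (hw : w ∈ F.pa v) => if _ : w ∈ G.pa v then t w else t w) :=
    h (fun w _ => t w) (fun w _ => t w) (fun w _ => t w)
  have e1 : G.fn v (fun w (hw : w ∈ G.pa v) => if _ : w ∈ F.pa v then t w else t w)
      = G.fn v (fun w _ => t w) := by
    congr 1; funext w hw; split_ifs <;> rfl
  have e2 : F.fn v (fun w (hw : w ∈ F.pa v) => if _ : w ∈ G.pa v then t w else t w)
      = F.fn v (fun w _ => t w) := by
    congr 1; funext w hw; split_ifs <;> rfl
  rw [← e1, ← e2, h2]

lemma satC_Phi_iff (Sm : Set (Asg V Val)) (G F : Sys V Val) :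
    satC Sm G (Phi F) ↔
      ((∀ v ∈ F.En, ∀ t : Asg V Val, ∀ s ∈ Sm,
        (if v ∈ G.En then G.fn v (fun w _ => t w) else s v) = F.fn v (fun w _ => t w)) ∧
       (∀ v ∈ ((Finset.univ : Finset V) \ F.En) ∪ Cn F, ∀ t : Asg V Val, ∀ s ∈ Sm,
        (if v ∈ G.En then G.fn v (fun w _ => t w) else s v) = s v)) := by
  rw [Phi, satC_and', satC_bigAnd, satC_bigAnd]
  constructor
  · intro ⟨h1, h2⟩
    refine ⟨fun v hv => ?_, fun v hv => ?_⟩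
    · exact (satC_eta Sm G F v).mp (h1 _ (List.mem_map_of_mem (Finset.mem_toList.mpr hv)))
    · exact (satC_xi Sm G v).mp (h2 _ (List.mem_map_of_mem (Finset.mem_toList.mpr hv)))
  · intro ⟨h1, h2⟩
    constructor
    · intro φ hφ
      obtain ⟨v, hv, rfl⟩ := List.mem_map.mp hφ
      exact (satC_eta Sm G F v).mpr (h1 v (Finset.mem_toList.mp hv))
    · intro φ hφ
      obtain ⟨v, hv, rfl⟩ := List.mem_map.mp hφ
      exact (satC_xi Sm G v).mpr (h2 v (Finset.mem_toList.mp hv))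

lemma satC_Phi_iff_sim (Sm : Finset (Asg V Val)) (G F : Sys V Val)
    (hS : ∀ s ∈ Sm, Compat G s) (hF : ∀ s ∈ Sm, Compat F s) (hne : Sm.Nonempty) :
    satC (↑Sm : Set (Asg V Val)) G (Phi F) ↔ Sim G F := by
  obtain ⟨s0, hs0⟩ := hne
  have hs0' : s0 ∈ (↑Sm : Set (Asg V Val)) := Finset.mem_coe.mpr hs0
  rw [satC_Phi_iff]
  constructor
  · rintro ⟨hA, hB⟩
    have claim1 : ∀ v, v ∈ strictEn F → v ∈ strictEn G := by
      intro v hv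
      rw [strictEn, Finset.mem_sdiff] at hv ⊢
      obtain ⟨hvF, hvC⟩ := hv
      have hAv := hA v hvF
      by_cases hvG : v ∈ G.En
      · refine ⟨hvG, fun hCn => ?_⟩
        obtain ⟨-, c, hc⟩ := (mem_Cn_iff G v).mp hCn
        apply hvC
        rw [mem_Cn_iff]
        refine ⟨hvF, c, fn_const_of_forall_total F v c fun t => ?_⟩
        have := hAv t s0 hs0'
        rw [if_pos hvG, hc] at this
        exact this.symm
      · exfalso
        apply hvC
        rw [mem_Cn_iff]
        refine ⟨hvF, s0 v, fn_const_of_forall_total F v _ fun t => ?_⟩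
        have := hAv t s0 hs0'
        rw [if_neg hvG] at this
        exact this.symm
    have claim2 : ∀ v, v ∈ strictEn G → v ∈ strictEn F := by
      intro v hv
      rw [strictEn, Finset.mem_sdiff] at hv
      obtain ⟨hvG, hvC⟩ := hv
      by_contra hns
      have hBv : ∀ t : Asg V Val, ∀ s ∈ (↑Sm : Set (Asg V Val)),
          (if v ∈ G.En then G.fn v (fun w _ => t w) else s v) = s v := by
        apply hB v
        rw [Finset.mem_union]
        rw [strictEn, Finset.mem_sdiff] at hns
        push_neg at hns
        by_cases hvF : v ∈ F.En
        · exact Or.inr (hns hvF)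
        · exact Or.inl (Finset.mem_sdiff.mpr ⟨Finset.mem_univ v, hvF⟩)
      apply hvC
      rw [mem_Cn_iff]
      refine ⟨hvG, s0 v, fn_const_of_forall_total G v _ fun t => ?_⟩
      have := hBv t s0 hs0'
      rwa [if_pos hvG] at this
    have hEq : strictEn G = strictEn F :=
      Finset.ext fun v => ⟨claim2 v, claim1 v⟩
    refine ⟨hEq, fun v hv => ?_⟩
    have hvF : v ∈ strictEn F := claim2 v hv
    have hvG : v ∈ G.En := (Finset.mem_sdiff.mp hv).1
    refine simFn_of_total G F v fun t => ?_
    have := hA v (Finset.mem_sdiff.mp hvF).1 t s0 hs0'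
    rwa [if_pos hvG] at this
  · rintro ⟨hEq, hFn⟩
    constructor
    · intro v hvF t s hs
      by_cases hstrict : v ∈ strictEn F
      · have hvG' : v ∈ strictEn G := hEq ▸ hstrict
        have hvG : v ∈ G.En := (Finset.mem_sdiff.mp hvG').1
        rw [if_pos hvG]
        exact total_of_simFn G F v (hFn v hvG') t
      · have hvCn : v ∈ Cn F := by
          rw [strictEn, Finset.mem_sdiff] at hstrict
          push_neg at hstrict
          exact hstrict hvF
        obtain ⟨-, c, hc⟩ := (mem_Cn_iff F v).mp hvCn
        rw [hc]
        have hsv : s v = c := by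
          have := hF s (Finset.mem_coe.mp hs) v hvF
          rw [this, hc]
        by_cases hvG : v ∈ G.En
        · rw [if_pos hvG]
          by_cases hvCnG : v ∈ Cn G
          · obtain ⟨-, c', hc'⟩ := (mem_Cn_iff G v).mp hvCnG
            rw [hc']
            have hsv' : s v = c' := by
              have := hS s (Finset.mem_coe.mp hs) v hvG
              rw [this, hc']
            rw [← hsv', hsv]
          · exact absurd (hEq ▸ (Finset.mem_sdiff.mpr ⟨hvG, hvCnG⟩) : v ∈ strictEn F) hstrict
        · rw [if_neg hvG]
          exact hsv
    · intro v hv t s hs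
      have hnsF : v ∉ strictEn F := by
        rw [strictEn, Finset.mem_sdiff]
        rcases Finset.mem_union.mp hv with h | h
        · exact fun hc => (Finset.mem_sdiff.mp h).2 hc.1
        · exact fun hc => hc.2 h
      by_cases hvG : v ∈ G.En
      · rw [if_pos hvG]
        have hvCnG : v ∈ Cn G := by
          by_contra hcn
          exact hnsF (hEq ▸ (Finset.mem_sdiff.mpr ⟨hvG, hcn⟩) : v ∈ strictEn F)
        obtain ⟨-, c, hc⟩ := (mem_Cn_iff G v).mp hvCnG
        rw [hc]
        have := hS s (Finset.mem_coe.mp hs) v hvG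
        rw [this, hc]
      · rw [if_neg hvG]

end Aux

end CausalTeam

open CausalTeam

/-- For nonempty recursive causal teams `S = (Sm, G)` and `T = (Tm, F)`:
`S ⊨ Θ^T ∧ Φ^F` iff `S ≈ R ⊆ T` for some causal team `R`. -/
theorem Theta_and_Phi_characterization {V : Type} [Fintype V] [DecidableEq V] [Nonempty V]
    {Val : V → Type} [∀ v, Fintype (Val v)] [∀ v, DecidableEq (Val v)] [∀ v, Nonempty (Val v)]
    (Sm Tm : Finset (Asg V Val)) (G F : Sys V Val)
    (hS : ∀ s ∈ Sm, Compat G s) (hT : ∀ s ∈ Tm, Compat F s)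
    (hSne : Sm.Nonempty) (hTne : Tm.Nonempty) :
    satC (↑Sm : Set (Asg V Val)) G (Fml.and (Theta Tm) (Phi F)) ↔
      ∃ (Rm : Finset (Asg V Val)) (FR : Sys V Val), (∀ s ∈ Rm, Compat FR s) ∧
        (Sm = Rm ∧ Sim G FR) ∧ (FR = F ∧ Rm ⊆ Tm) := by
  rw [satC_and', satC_Theta]
  constructor
  · rintro ⟨hsub, hphi⟩
    have hF : ∀ s ∈ Sm, Compat F s := fun s hs => hT s (hsub hs)
    exact ⟨Sm, F, hF, ⟨rfl, (satC_Phi_iff_sim Sm G F hS hF hSne).mp hphi⟩, rfl, hsub⟩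
  · rintro ⟨Rm, FR, hRcompat, ⟨rfl, hsim⟩, rfl, hsub⟩
    exact ⟨hsub, (satC_Phi_iff_sim Sm G FR hS hRcompat hSne).mpr hsim⟩
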